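/- Let A be a real m×d matrix, σ_y > 0, σ_init > 0, ρ > 1. For each integer n ≥ 1, let σ²[n] = σ_init²/ρ^{n-1}, suppose 0 < ν[n] ≤ σ²[n], and define C[n] = ((1/σ_y²) AᵀA + (1/ν[n])·I)⁻¹. Then for all n: C[n] ⪯ ν[n]·I ⪯ (σ_init²/ρ^{n-1})·I in the Loewner order; in particular trace(C[n]) ≤ d·σ_init²/ρ^{n-1}, and trace(C[n]) → 0 as n → ∞. Hence if x̂[n] - x₀ is a centered Gaussian random vector with covariance C[n], then E‖x̂[n] - x₀‖² ≤ d·σ_init²/ρ^{n-1} → 0, i.e., the FIRE iterates x̂[n] converge to the true x₀ in mean square. -/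

import Mathlib

open Matrix MeasureTheory

private lemma psd_smul' {d : ℕ} {c : ℝ} (hc : 0 ≤ c) {M : Matrix (Fin d) (Fin d) ℝ}
    (hM : M.PosSemidef) : (c • M).PosSemidef := by
  refine ⟨?_, fun x => ?_⟩
  · unfold Matrix.IsHermitian
    rw [conjTranspose_smul, hM.1]
    simp
  · exact (hM.smul hc).2 x

private lemma pd_smul_one' {d : ℕ} {c : ℝ} (hc : 0 < c) :
    (c • (1 : Matrix (Fin d) (Fin d) ℝ)).PosDef := by
  refine ⟨?_, fun x hx => ?_⟩
  · unfold Matrix.IsHermitian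
    rw [conjTranspose_smul, conjTranspose_one]
    simp
  · exact (Matrix.PosDef.one.smul hc).2 hx

private lemma psd_diag_nonneg' {d : ℕ} {M : Matrix (Fin d) (Fin d) ℝ} (hM : M.PosSemidef)
    (i : Fin d) : 0 ≤ M i i := by
  exact hM.diag_nonneg

private lemma psd_trace_nonneg' {d : ℕ} {M : Matrix (Fin d) (Fin d) ℝ} (hM : M.PosSemidef) :
    0 ≤ M.trace :=
  Finset.sum_nonneg fun i _ => psd_diag_nonneg' hM i

/-- Key covariance bound: the inverse `C = ((1/σy²)AᵀA + (1/ν)I)⁻¹` is PSD and satisfies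
`C ⪯ ν I`. -/
private lemma fire_key (m d : ℕ) (A : Matrix (Fin m) (Fin d) ℝ) (σy ν : ℝ)
    (hσy : 0 < σy) (hν : 0 < ν) :
    (ν • (1 : Matrix (Fin d) (Fin d) ℝ)
      - ((1 / σy ^ 2) • (Aᵀ * A) + (1 / ν) • (1 : Matrix (Fin d) (Fin d) ℝ))⁻¹).PosSemidef
    ∧ (((1 / σy ^ 2) • (Aᵀ * A)
      + (1 / ν) • (1 : Matrix (Fin d) (Fin d) ℝ))⁻¹).PosSemidef := by
  set S : Matrix (Fin d) (Fin d) ℝ := (1 / σy ^ 2) • (Aᵀ * A) with hS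
  set B : Matrix (Fin d) (Fin d) ℝ := S + (1 / ν) • 1 with hB
  have hSpsd : S.PosSemidef := by
    apply psd_smul' (by positivity)
    have := posSemidef_conjTranspose_mul_self A
    rwa [conjTranspose_eq_transpose_of_trivial] at this
  have hBpd : B.PosDef := Matrix.PosDef.posSemidef_add hSpsd (pd_smul_one' (by positivity))
  have hBu : IsUnit B := hBpd.isUnit
  have h1 : B⁻¹ * B = 1 := nonsing_inv_mul B (isUnit_iff_isUnit_det B |>.1 hBu)
  have h2 : B * B⁻¹ = 1 := mul_nonsing_inv B (isUnit_iff_isUnit_det B |>.1 hBu)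
  refine ⟨?_, hBpd.inv.posSemidef⟩
  have hMpsd : (ν • (S * S) + S).PosSemidef := by
    refine Matrix.PosSemidef.add (psd_smul' hν.le ?_) hSpsd
    have := hSpsd.pow 2
    rwa [pow_two] at this
  have hkey : ν • (1 : Matrix (Fin d) (Fin d) ℝ) - B⁻¹ = B⁻¹ * (ν • (S * S) + S) * B⁻¹ := by
    have hexp : ν • (S * S) + S = ν • (B * B) - B := by
      rw [hB]
      simp only [add_mul, mul_add, mul_one, one_mul, smul_mul_assoc, mul_smul_comm,
        smul_smul, smul_add, smul_sub]
      rw [show ν * (1 / ν) = 1 by field_simp, show ν * (1 / ν * (1 / ν)) = 1 / ν by field_simp,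
        one_smul]
      abel
    rw [hexp]
    simp only [Matrix.mul_sub, Matrix.sub_mul, Matrix.mul_smul, Matrix.smul_mul,
      ← Matrix.mul_assoc, h1, h2, Matrix.one_mul, Matrix.mul_one]
  rw [hkey]
  have := hMpsd.mul_mul_conjTranspose_same B⁻¹
  rwa [hBpd.inv.isHermitian.eq] at this

/-- Theorem 1 of the paper at the covariance level. With the geometric schedule
`σ²[n] = σ_init²/ρⁿ` (indexing the iterations by `n = 0, 1, 2, …`) and denoiser output-error
variances `0 < ν[n] ≤ σ²[n]`, the FIRE error covariances
`C[n] = ((1/σ_y²)AᵀA + (1/ν[n])I)⁻¹` satisfy `C[n] ⪯ ν[n]I ⪯ (σ_init²/ρⁿ)I` in the Loewner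
order, `trace C[n] ≤ d σ_init²/ρⁿ → 0`, and any centered random vector with covariance `C[n]`
(in particular the FIRE error `x̂[n] - x₀`) has `E‖x̂[n] - x₀‖² ≤ d σ_init²/ρⁿ → 0`,
i.e. the iterates converge to `x₀` in mean square. -/
theorem fire_convergence
    (m d : ℕ) (A : Matrix (Fin m) (Fin d) ℝ) (σy σinit ρ : ℝ)
    (hσy : 0 < σy) (hσinit : 0 < σinit) (hρ : 1 < ρ)
    (ν : ℕ → ℝ) (hν : ∀ n, 0 < ν n ∧ ν n ≤ σinit ^ 2 / ρ ^ n)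
    (C : ℕ → Matrix (Fin d) (Fin d) ℝ)
    (hC : ∀ n, C n = ((1 / σy ^ 2) • (Aᵀ * A)
        + (1 / ν n) • (1 : Matrix (Fin d) (Fin d) ℝ))⁻¹) :
    (∀ n, (ν n • (1 : Matrix (Fin d) (Fin d) ℝ) - C n).PosSemidef
        ∧ ((σinit ^ 2 / ρ ^ n) • (1 : Matrix (Fin d) (Fin d) ℝ)
            - ν n • (1 : Matrix (Fin d) (Fin d) ℝ)).PosSemidef)
    ∧ (∀ n, (C n).trace ≤ d * σinit ^ 2 / ρ ^ n)
    ∧ Filter.Tendsto (fun n => (C n).trace) Filter.atTop (nhds 0)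
    ∧ (∀ n, ∀ μ : Measure (Fin d → ℝ), IsProbabilityMeasure μ →
        (∀ i j, ∫ x, x i * x j ∂μ = C n i j) →
        (∫ x, ∑ i, (x i) ^ 2 ∂μ) ≤ d * σinit ^ 2 / ρ ^ n)
    ∧ Filter.Tendsto (fun n : ℕ => (d : ℝ) * σinit ^ 2 / ρ ^ n) Filter.atTop (nhds 0) := by
  have hρ0 : 0 < ρ := lt_trans one_pos hρ
  have hkey : ∀ n, (ν n • (1 : Matrix (Fin d) (Fin d) ℝ) - C n).PosSemidef
      ∧ (C n).PosSemidef := by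
    intro n
    rw [hC n]
    exact fire_key m d A σy (ν n) hσy (hν n).1
  have hpart1 : ∀ n, (ν n • (1 : Matrix (Fin d) (Fin d) ℝ) - C n).PosSemidef
      ∧ ((σinit ^ 2 / ρ ^ n) • (1 : Matrix (Fin d) (Fin d) ℝ)
          - ν n • (1 : Matrix (Fin d) (Fin d) ℝ)).PosSemidef := by
    intro n
    refine ⟨(hkey n).1, ?_⟩
    rw [← sub_smul]
    exact psd_smul' (by linarith [(hν n).2]) Matrix.PosSemidef.one
  have htrace : ∀ n, (C n).trace ≤ d * σinit ^ 2 / ρ ^ n := by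
    intro n
    have h0 := psd_trace_nonneg' (hpart1 n).1
    rw [trace_sub, trace_smul, trace_one, sub_nonneg] at h0
    have hcard : (Fintype.card (Fin d) : ℝ) = d := by simp
    have h1 : (C n).trace ≤ ν n * d := by
      rw [← hcard]
      simpa [smul_eq_mul] using h0
    calc (C n).trace ≤ ν n * d := h1
      _ ≤ (σinit ^ 2 / ρ ^ n) * d := by
          apply mul_le_mul_of_nonneg_right (hν n).2 (by positivity)
      _ = d * σinit ^ 2 / ρ ^ n := by ring
  have htend : Filter.Tendsto (fun n : ℕ => (d : ℝ) * σinit ^ 2 / ρ ^ n)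
      Filter.atTop (nhds 0) := by
    have h1 : Filter.Tendsto (fun n : ℕ => (ρ⁻¹) ^ n) Filter.atTop (nhds 0) :=
      tendsto_pow_atTop_nhds_zero_of_lt_one (by positivity) (inv_lt_one_of_one_lt₀ hρ)
    have h2 := h1.const_mul ((d : ℝ) * σinit ^ 2)
    simpa [div_eq_mul_inv, inv_pow] using h2
  refine ⟨hpart1, htrace, ?_, ?_, htend⟩
  · refine squeeze_zero (fun n => psd_trace_nonneg' (hkey n).2) htrace htend
  · intro n μ hμ hcov
    by_cases hint : Integrable (fun x : Fin d → ℝ => ∑ i, (x i) ^ 2) μ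
    · have hmeas : ∀ i : Fin d, AEStronglyMeasurable (fun x : Fin d → ℝ => (x i) ^ 2) μ :=
        fun i => ((continuous_apply i).pow 2).aestronglyMeasurable
      have hinti : ∀ i : Fin d, Integrable (fun x : Fin d → ℝ => (x i) ^ 2) μ := by
        intro i
        refine hint.mono' (hmeas i) ?_
        filter_upwards with x
        rw [Real.norm_eq_abs, abs_of_nonneg (sq_nonneg _)]
        exact Finset.single_le_sum (f := fun j => (x j) ^ 2)
          (fun j _ => sq_nonneg _) (Finset.mem_univ i)
      rw [integral_finset_sum _ (fun i _ => hinti i)]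
      have hsum : ∑ i, ∫ x, (x i) ^ 2 ∂μ = (C n).trace := by
        unfold Matrix.trace
        refine Finset.sum_congr rfl fun i _ => ?_
        rw [Matrix.diag, ← hcov i i]
        simp [pow_two]
      rw [hsum]
      exact htrace n
    · rw [integral_undef hint]
      positivity
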